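/- Let a > 1, |b| > 1, a ≠ b, c = (ab−1)/(a−b), and consider Q(z) := (1 + 4ac + 4cz − z²)/(2c) for z ∈ R. If Q, multiplied by (1−z²)/2, has a double root p_0 with p_0 ≠ ±1, then p_0 = 2c, and consequently |p_0| > 2, so p_0 ∉ (−1, 1). -/

import Mathlib

/-- Let `a > 1`, `|b| > 1`, `a ≠ b`, `c = (ab−1)/(a−b)`, and
`Q(z) = (1 + 4ac + 4cz − z²)/(2c)`. If the quartic `P(z) = Q(z)(1−z²)/2` has a
double root `p₀` with `p₀ ≠ ±1`, then `p₀ = 2c`, hence `|p₀| > 2` and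
`p₀ ∉ (−1, 1)`. -/
theorem stmt_8 (a b : ℝ) (ha : 1 < a) (hb : 1 < |b|) (hab : a ≠ b)
    (c : ℝ) (hc : c = (a * b - 1) / (a - b))
    (Q P : ℝ → ℝ)
    (hQ : ∀ z, Q z = (1 + 4 * a * c + 4 * c * z - z ^ 2) / (2 * c))
    (hPdef : ∀ z, P z = Q z * (1 - z ^ 2) / 2)
    (p0 : ℝ) (hp1 : p0 ≠ 1) (hp2 : p0 ≠ -1)
    (hroot : P p0 = 0) (hdroot : deriv P p0 = 0) :
    p0 = 2 * c ∧ 2 < |p0| ∧ p0 ∉ Set.Ioo (-1 : ℝ) 1 := by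
  have hab' : a - b ≠ 0 := sub_ne_zero.mpr hab
  have hb2 : 1 < b ^ 2 := by nlinarith [sq_abs b]
  have ha2 : 1 < a ^ 2 := by nlinarith
  have hkey : (a - b) ^ 2 < (a * b - 1) ^ 2 := by
    nlinarith [mul_pos (by linarith : (0:ℝ) < a ^ 2 - 1) (by linarith : (0:ℝ) < b ^ 2 - 1)]
  have hc2 : 1 < c ^ 2 := by
    rw [hc, div_pow]
    rw [lt_div_iff₀ (by positivity)]
    linarith
  have hcne : c ≠ 0 := by
    intro h
    rw [h] at hc2
    norm_num at hc2
  -- rewrite P as explicit polynomial over 4c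
  have hPfun : P = fun z => (1 + 4 * a * c + 4 * c * z - z ^ 2) * (1 - z ^ 2) / (4 * c) := by
    funext z
    rw [hPdef, hQ, div_mul_eq_mul_div, div_div]
    ring_nf
  have hA : HasDerivAt (fun z : ℝ => 1 + 4 * a * c + 4 * c * z - z ^ 2)
      (4 * c - 2 * p0) p0 := by
    have h1 : HasDerivAt (fun z : ℝ => 1 + 4 * a * c + 4 * c * z) (4 * c) p0 := by
      simpa using ((hasDerivAt_id p0).const_mul (4 * c)).const_add (1 + 4 * a * c)
    have h2 : HasDerivAt (fun z : ℝ => z ^ 2) (2 * p0) p0 := by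
      simpa using hasDerivAt_pow 2 p0
    exact h1.sub h2
  have hB : HasDerivAt (fun z : ℝ => 1 - z ^ 2) (-(2 * p0)) p0 := by
    have h2 : HasDerivAt (fun z : ℝ => z ^ 2) (2 * p0) p0 := by
      simpa using hasDerivAt_pow 2 p0
    have := (hasDerivAt_const p0 (1:ℝ)).sub h2
    rw [zero_sub] at this
    exact this
  have hD : HasDerivAt P
      (((4 * c - 2 * p0) * (1 - p0 ^ 2) +
        (1 + 4 * a * c + 4 * c * p0 - p0 ^ 2) * (-(2 * p0))) / (4 * c)) p0 := by
    rw [hPfun]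
    exact (hA.mul hB).div_const (4 * c)
  have hderiv := hD.deriv
  rw [hdroot] at hderiv
  -- from the root condition, numerator vanishes
  have h1p : (1 : ℝ) - p0 ^ 2 ≠ 0 := by
    intro h
    have : (1 - p0) * (1 + p0) = 0 := by ring_nf; linarith [h]
    rcases mul_eq_zero.mp this with h' | h'
    · exact hp1 (by linarith)
    · exact hp2 (by linarith)
  have hN : 1 + 4 * a * c + 4 * c * p0 - p0 ^ 2 = 0 := by
    have := hroot
    rw [hPfun] at this
    have h4c : (4 : ℝ) * c ≠ 0 := by positivity
    have := (div_eq_zero_iff.mp this).resolve_right h4c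
    exact (mul_eq_zero.mp this).resolve_right h1p
  -- deduce p0 = 2c
  have hp0 : p0 = 2 * c := by
    rw [hN, zero_mul, add_zero] at hderiv
    have h4c : (4 : ℝ) * c ≠ 0 := by positivity
    have := (div_eq_zero_iff.mp hderiv.symm).resolve_right h4c
    rcases mul_eq_zero.mp this with h' | h'
    · linarith
    · exact absurd h' h1p
  refine ⟨hp0, ?_, ?_⟩
  · have h4 : (2:ℝ) ^ 2 < |p0| ^ 2 := by
      rw [sq_abs, hp0]
      nlinarith
    have := lt_of_pow_lt_pow_left₀ 2 (abs_nonneg p0) h4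
    exact this
  · rintro ⟨hl, hr⟩
    have : |p0| < 1 := abs_lt.mpr ⟨hl, hr⟩
    have h4 : (2:ℝ) ^ 2 < |p0| ^ 2 := by
      rw [sq_abs, hp0]
      nlinarith
    nlinarith [abs_nonneg p0]
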